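/- Let (X,d,μ) be a space of homogeneous type, let δ ∈ (0,1) with δ ≤ (2A₀)^{-10} be fixed, and let γ ∈ (0,∞). Then there exists a constant C > 0 such that for every locally integrable function u : X → ℝ, every k ∈ ℤ, and every x ∈ X, one has ∫_X D_γ(x,y;δ^k)·|u(y) − u_{B(x,δ^k)}| dμ(y) ≤ C·Σ_{i=0}^{∞} δ^{iγ}·⨍_{B(x,δ^{k−i})} |u(y) − u_{B(x,δ^{k−i})}| dμ(y) (both sides being interpreted in [0,∞]). -/

import Mathlib

open MeasureTheory ENNReal

noncomputable section

namespace SHT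

variable {X : Type*}

/-- The quasi-metric ball `B(x,r) := {y : d(x,y) < r}`. -/
def ball (d : X → X → ℝ) (x : X) (r : ℝ) : Set X := {y | d x y < r}

/-- `(X, d, μ)` is a space of homogeneous type with quasi-triangle constant `A₀`
and doubling constant `Cμ`. -/
structure IsSHT [MeasurableSpace X] (d : X → X → ℝ) (μ : Measure X) (A₀ Cμ : ℝ) : Prop where
  one_le_A : 1 ≤ A₀
  nonneg : ∀ x y, 0 ≤ d x y
  eq_zero_iff : ∀ x y, d x y = 0 ↔ x = y
  symm : ∀ x y, d x y = d y x
  triangle : ∀ x y z, d x z ≤ A₀ * (d x y + d y z)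
  measurable_ball : ∀ x r, MeasurableSet (ball d x r)
  one_le_C : 1 ≤ Cμ
  ball_pos : ∀ x, ∀ r : ℝ, 0 < r → 0 < μ (ball d x r)
  ball_lt_top : ∀ x, ∀ r : ℝ, 0 < r → μ (ball d x r) < ⊤
  doubling : ∀ x, ∀ r : ℝ, 0 < r →
    μ (ball d x (2 * r)) ≤ ENNReal.ofReal Cμ * μ (ball d x r)

/-- The decay factor
`D_γ(x,y;r) := [μ(B(x,r)) + μ(B(x,d(x,y)))]⁻¹ (r/(r+d(x,y)))^γ`, in `[0,∞]`. -/
def Dgamma [MeasurableSpace X] (d : X → X → ℝ) (μ : Measure X) (γ : ℝ)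
    (x y : X) (r : ℝ) : ℝ≥0∞ :=
  (μ (ball d x r) + μ (ball d x (d x y)))⁻¹ *
    ENNReal.ofReal ((r / (r + d x y)) ^ γ)

lemma ball_mono (d : X → X → ℝ) (x : X) {r r' : ℝ} (h : r ≤ r') :
    ball d x r ⊆ ball d x r' := fun _ hy => lt_of_lt_of_le hy h

lemma zpow_anti_of_base_le_one {a : ℝ} (h0 : 0 < a) (h1 : a ≤ 1) {m n : ℤ} (h : m ≤ n) :
    a ^ n ≤ a ^ m := by
  have hsplit : a ^ n = a ^ m * a ^ (n - m) := by
    rw [← zpow_add₀ h0.ne']; congr 1; ring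
  have ht : a ^ (n - m) ≤ 1 := by
    have he : a ^ (n - m) = a ^ ((n - m).toNat) := by
      rw [← zpow_natCast, Int.toNat_of_nonneg (sub_nonneg.mpr h)]
    rw [he]
    exact pow_le_one₀ h0.le h1
  calc a ^ n = a ^ m * a ^ (n - m) := hsplit
    _ ≤ a ^ m * 1 := mul_le_mul_of_nonneg_left ht (zpow_pos h0 m).le
    _ = a ^ m := mul_one _

lemma doubling_pow [MeasurableSpace X] {d : X → X → ℝ} {μ : Measure X} {A₀ Cμ : ℝ}
    (hS : IsSHT d μ A₀ Cμ) (n : ℕ) (x : X) (r : ℝ) (hr : 0 < r) :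
    μ (ball d x (2 ^ n * r)) ≤ ENNReal.ofReal Cμ ^ n * μ (ball d x r) := by
  induction n with
  | zero => simp
  | succ n ih =>
    have h2 : (2:ℝ) ^ (n+1) * r = 2 * (2 ^ n * r) := by ring
    rw [h2]
    calc μ (ball d x (2 * (2 ^ n * r))) ≤ ENNReal.ofReal Cμ * μ (ball d x (2 ^ n * r)) :=
          hS.doubling x _ (by positivity)
      _ ≤ ENNReal.ofReal Cμ * (ENNReal.ofReal Cμ ^ n * μ (ball d x r)) := by gcongr
      _ = ENNReal.ofReal Cμ ^ (n+1) * μ (ball d x r) := by ring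

/-- For `γ > 0` there is `C > 0` such that, for every locally
integrable `u`, every `k ∈ ℤ`, and every `x ∈ X`,
`∫_X D_γ(x,y;δ^k) |u(y) - u_{B(x,δ^k)}| dμ(y)
  ≤ C Σ_{i=0}^∞ δ^{iγ} ⨍_{B(x,δ^{k-i})} |u - u_{B(x,δ^{k-i})}| dμ`. -/
theorem Dgamma_oscillation_bound
    [MeasurableSpace X] (d : X → X → ℝ) (μ : Measure X) (A₀ Cμ δ : ℝ)
    (hSHT : IsSHT d μ A₀ Cμ)
    (hδ0 : 0 < δ) (hδ1 : δ < 1) (hδA : δ ≤ (2 * A₀) ^ (-10 : ℤ))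
    (γ : ℝ) (hγ : 0 < γ) :
    ∃ C : ℝ, 0 < C ∧
      ∀ u : X → ℝ, Measurable u →
        (∀ (z : X) (r : ℝ), 0 < r → IntegrableOn u (ball d z r) μ) →
        ∀ (k : ℤ) (x : X),
        (∫⁻ y, Dgamma d μ γ x y (δ ^ k) *
            ENNReal.ofReal |u y - ⨍ z in ball d x (δ ^ k), u z ∂μ| ∂μ) ≤
          ENNReal.ofReal C *
            ∑' i : ℕ, ENNReal.ofReal (δ ^ ((i : ℝ) * γ)) *
              ((μ (ball d x (δ ^ (k - i))))⁻¹ *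
                ∫⁻ y in ball d x (δ ^ (k - i)),
                  ENNReal.ofReal |u y - ⨍ z in ball d x (δ ^ (k - i)), u z ∂μ| ∂μ) := by
  classical
  obtain ⟨N, hN⟩ := pow_unbounded_of_one_lt (R := ℝ) δ⁻¹ one_lt_two
  have hC1 : (1:ℝ) ≤ Cμ := hSHT.one_le_C
  have hC0 : (0:ℝ) ≤ Cμ := le_trans zero_le_one hC1
  set K : ℝ := Cμ ^ N with hKdef
  have hK1 : (1:ℝ) ≤ K := one_le_pow₀ hC1
  have hK0 : (0:ℝ) < K := lt_of_lt_of_le one_pos hK1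
  have hδγ1 : δ ^ γ < 1 := Real.rpow_lt_one hδ0.le hδ1 hγ
  have hδγ0 : (0:ℝ) < δ ^ γ := Real.rpow_pos_of_pos hδ0 γ
  refine ⟨(K + K ^ 2) * δ ^ (-γ) * (1 - δ ^ γ)⁻¹,
    mul_pos (mul_pos (by positivity) (Real.rpow_pos_of_pos hδ0 _))
      (inv_pos.mpr (sub_pos.mpr hδγ1)), ?_⟩
  intro u hu hint k x
  set Ke : ℝ≥0∞ := ENNReal.ofReal K with hKe
  have hKe1 : (1:ℝ≥0∞) ≤ Ke := ENNReal.one_le_ofReal.mpr hK1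
  have hKe0 : Ke ≠ 0 := by
    simp only [hKe, ne_eq, ENNReal.ofReal_eq_zero, not_le]; exact hK0
  have hKetop : Ke ≠ ⊤ := ENNReal.ofReal_ne_top
  set B : ℕ → Set X := fun i => ball d x (δ ^ (k - i)) with hBdef
  set c : ℕ → ℝ := fun i => ⨍ z in B i, u z ∂μ with hcdef
  set osc : ℕ → ℝ≥0∞ := fun i => ∫⁻ y in B i, ENNReal.ofReal |u y - c i| ∂μ with hoscdef
  set a : ℕ → ℝ≥0∞ := fun i => (μ (B i))⁻¹ * osc i with hadef
  have hrpos : ∀ i : ℕ, (0:ℝ) < δ ^ (k - (i:ℤ)) := fun i => zpow_pos hδ0 _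
  have hBmeas : ∀ i, MeasurableSet (B i) := fun i => hSHT.measurable_ball x _
  have hBne : ∀ i, μ (B i) ≠ 0 := fun i => (hSHT.ball_pos x _ (hrpos i)).ne'
  have hBtop : ∀ i, μ (B i) ≠ ⊤ := fun i => (hSHT.ball_lt_top x _ (hrpos i)).ne
  have hmono : Monotone B := by
    intro i j hij
    exact ball_mono d x (zpow_anti_of_base_le_one hδ0 hδ1.le (by exact_mod_cast sub_le_sub_left (by exact_mod_cast hij) k))
  have hB0 : B 0 = ball d x (δ ^ k) := by
    simp only [hBdef, Nat.cast_zero, sub_zero]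
  -- covering
  have hcover : (⋃ i, B i) = Set.univ := by
    ext y
    simp only [Set.mem_iUnion, Set.mem_univ, iff_true]
    obtain ⟨n, hn⟩ := pow_unbounded_of_one_lt (R := ℝ) (d x y * δ ^ (-k)) (one_lt_inv₀ hδ0 |>.mpr hδ1)
    refine ⟨n, ?_⟩
    show d x y < δ ^ (k - (n:ℤ))
    have hkpos : (0:ℝ) < δ ^ k := zpow_pos hδ0 _
    have h1 : d x y * δ ^ (-k) * δ ^ k < δ⁻¹ ^ n * δ ^ k :=
      mul_lt_mul_of_pos_right hn hkpos
    have h2 : d x y * δ ^ (-k) * δ ^ k = d x y := by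
      rw [mul_assoc, ← zpow_add₀ hδ0.ne']
      simp
    have h3 : δ⁻¹ ^ n * δ ^ k = δ ^ (k - (n:ℤ)) := by
      rw [inv_pow, ← zpow_natCast δ n, ← zpow_neg, ← zpow_add₀ hδ0.ne']
      congr 1
      ring
    rw [h2, h3] at h1
    exact h1
  -- doubling step
  have hKstep : ∀ i : ℕ, μ (B (i+1)) ≤ Ke * μ (B i) := by
    intro i
    have hrad : δ ^ (k - ((i+1:ℕ):ℤ)) ≤ 2 ^ N * δ ^ (k - (i:ℤ)) := by
      have he : δ ^ (k - ((i+1:ℕ):ℤ)) = δ⁻¹ * δ ^ (k - (i:ℤ)) := by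
        rw [← zpow_neg_one, ← zpow_add₀ hδ0.ne']
        congr 1
        push_cast
        ring
      rw [he]
      exact mul_le_mul_of_nonneg_right hN.le (hrpos i).le
    calc μ (B (i+1)) ≤ μ (ball d x (2 ^ N * δ ^ (k - (i:ℤ)))) :=
          measure_mono (ball_mono d x hrad)
      _ ≤ ENNReal.ofReal Cμ ^ N * μ (B i) := doubling_pow hSHT N x _ (hrpos i)
      _ = Ke * μ (B i) := by rw [hKe, hKdef, ENNReal.ofReal_pow hC0]
  have hKinv : ∀ i : ℕ, (μ (B i))⁻¹ ≤ Ke * (μ (B (i+1)))⁻¹ := by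
    intro i
    have h1 : (Ke * μ (B i))⁻¹ ≤ (μ (B (i+1)))⁻¹ := ENNReal.inv_le_inv.mpr (hKstep i)
    calc (μ (B i))⁻¹ = Ke * (Ke⁻¹ * (μ (B i))⁻¹) := by
          rw [← mul_assoc, ENNReal.mul_inv_cancel hKe0 hKetop, one_mul]
      _ = Ke * (Ke * μ (B i))⁻¹ := by rw [ENNReal.mul_inv (Or.inl hKe0) (Or.inl hKetop)]
      _ ≤ Ke * (μ (B (i+1)))⁻¹ := by gcongr
  -- integrability
  have hInt : ∀ i, IntegrableOn u (B i) μ := fun i => hint x _ (hrpos i)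
  have hIntAbs : ∀ i j : ℕ, IntegrableOn (fun y => |u y - c j|) (B i) μ := fun i j =>
    ((hInt i).sub (integrableOn_const (hSHT.ball_lt_top x _ (hrpos i)).ne)).abs
  have hoscR : ∀ i j : ℕ, ENNReal.ofReal (∫ y in B i, |u y - c j| ∂μ)
      = ∫⁻ y in B i, ENNReal.ofReal |u y - c j| ∂μ := fun i j =>
    ofReal_integral_eq_lintegral_ofReal (hIntAbs i j)
      (Filter.Eventually.of_forall fun y => abs_nonneg _)
  -- telescoping step
  have hstep : ∀ j : ℕ, ENNReal.ofReal |c j - c (j+1)| ≤ Ke * a (j+1) := by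
    intro j
    have htR : (0:ℝ) < (μ (B j)).toReal := ENNReal.toReal_pos (hBne j) (hBtop j)
    have hsub : c j - c (j+1) = ⨍ y in B j, (u y - c (j+1)) ∂μ := by
      rw [setAverage_eq]
      rw [integral_sub (hInt j)
        (integrableOn_const (hSHT.ball_lt_top x _ (hrpos j)).ne)]
      rw [setIntegral_const, smul_sub, smul_smul, measureReal_def]
      have : (μ (B j)).toReal⁻¹ * (μ (B j)).toReal = 1 := inv_mul_cancel₀ htR.ne'
      rw [this, one_smul, smul_eq_mul, hcdef]
      simp only [setAverage_eq, smul_eq_mul, measureReal_def]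
    have habs : |c j - c (j+1)| ≤ (μ (B j)).toReal⁻¹ * ∫ y in B j, |u y - c (j+1)| ∂μ := by
      rw [hsub, setAverage_eq, smul_eq_mul, abs_mul, measureReal_def,
        abs_of_nonneg (inv_nonneg.mpr ENNReal.toReal_nonneg)]
      gcongr
      simpa [Real.norm_eq_abs] using
        norm_integral_le_integral_norm (μ := μ.restrict (B j)) (fun y => u y - c (j+1))
    have hmon : ∫ y in B j, |u y - c (j+1)| ∂μ ≤ ∫ y in B (j+1), |u y - c (j+1)| ∂μ :=
      setIntegral_mono_set (hIntAbs (j+1) (j+1))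
        (Filter.Eventually.of_forall fun y => abs_nonneg _)
        (HasSubset.Subset.eventuallyLE (hmono (Nat.le_succ j)))
    have hnn : (0:ℝ) ≤ ∫ y in B (j+1), |u y - c (j+1)| ∂μ :=
      integral_nonneg fun y => abs_nonneg _
    calc ENNReal.ofReal |c j - c (j+1)|
        ≤ ENNReal.ofReal ((μ (B j)).toReal⁻¹ * ∫ y in B (j+1), |u y - c (j+1)| ∂μ) :=
          ENNReal.ofReal_le_ofReal (le_trans habs
            (mul_le_mul_of_nonneg_left hmon (inv_nonneg.mpr ENNReal.toReal_nonneg)))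
      _ = (μ (B j))⁻¹ * osc (j+1) := by
          rw [ENNReal.ofReal_mul (inv_nonneg.mpr ENNReal.toReal_nonneg),
            ENNReal.ofReal_inv_of_pos htR, ENNReal.ofReal_toReal (hBtop j), hoscR (j+1) (j+1)]
      _ ≤ (Ke * (μ (B (j+1)))⁻¹) * osc (j+1) := by gcongr; exact hKinv j
      _ = Ke * a (j+1) := by rw [hadef, mul_assoc]
  -- full telescope
  have htel : ∀ i : ℕ, ENNReal.ofReal |c i - c 0| ≤ Ke * ∑ j ∈ Finset.range (i+1), a j := by
    intro i
    have h1 : |c i - c 0| ≤ ∑ j ∈ Finset.range i, |c j - c (j+1)| := by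
      have h2 := dist_le_range_sum_dist c i
      calc |c i - c 0| = dist (c 0) (c i) := by rw [Real.dist_eq, abs_sub_comm]
        _ ≤ ∑ j ∈ Finset.range i, dist (c j) (c (j+1)) := h2
        _ = ∑ j ∈ Finset.range i, |c j - c (j+1)| := by simp [Real.dist_eq]
    calc ENNReal.ofReal |c i - c 0|
        ≤ ENNReal.ofReal (∑ j ∈ Finset.range i, |c j - c (j+1)|) := ENNReal.ofReal_le_ofReal h1
      _ = ∑ j ∈ Finset.range i, ENNReal.ofReal |c j - c (j+1)| :=
          ENNReal.ofReal_sum_of_nonneg fun j _ => abs_nonneg _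
      _ ≤ ∑ j ∈ Finset.range i, Ke * a (j+1) := Finset.sum_le_sum fun j _ => hstep j
      _ = Ke * ∑ j ∈ Finset.range i, a (j+1) := by rw [Finset.mul_sum]
      _ ≤ Ke * ∑ j ∈ Finset.range (i+1), a j := by
          gcongr
          rw [Finset.sum_range_succ' a i]
          exact le_self_add
  -- annuli
  set A : ℕ → Set X := disjointed B with hAdef
  have hApair : Pairwise (Function.onFun Disjoint A) := disjoint_disjointed B
  have hAmeas : ∀ i, MeasurableSet (A i) := MeasurableSet.disjointed hBmeas
  have hAsub : ∀ i, A i ⊆ B i := disjointed_subset B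
  have hA0 : A 0 = B 0 := disjointed_zero B
  have hAsucc : ∀ i, A (i+1) = B (i+1) \ B i := by
    intro i
    rw [hAdef, disjointed_add_one, hmono.partialSups_eq]
  have hAUnion : (⋃ i, A i) = Set.univ := by rw [hAdef, iUnion_disjointed, hcover]
  have hdecomp : (∫⁻ y, Dgamma d μ γ x y (δ ^ k) * ENNReal.ofReal |u y - c 0| ∂μ)
      = ∑' i : ℕ, ∫⁻ y in A i, Dgamma d μ γ x y (δ ^ k) * ENNReal.ofReal |u y - c 0| ∂μ := by
    rw [← setLIntegral_univ, ← hAUnion, lintegral_iUnion hAmeas hApair]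
  have hmeasv : ∀ (t : ℝ) (κ : ℝ≥0∞), Measurable fun y => κ * ENNReal.ofReal |u y - t| :=
    fun t κ => (ENNReal.measurable_ofReal.comp ((hu.sub measurable_const).abs)).const_mul κ
  set w : ℕ → ℝ≥0∞ := fun i => ENNReal.ofReal (δ ^ (((i:ℝ) - 1) * γ)) with hwdef
  -- bound on annulus i+1
  have hann : ∀ i : ℕ, (∫⁻ y in A (i+1), Dgamma d μ γ x y (δ ^ k) * ENNReal.ofReal |u y - c 0| ∂μ)
      ≤ (Ke + Ke ^ 2) * w (i+1) * ∑ j ∈ Finset.range (i+2), a j := by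
    intro i
    have hw1 : w (i+1) = ENNReal.ofReal (δ ^ ((i:ℝ) * γ)) := by
      rw [hwdef]
      simp only
      congr 2
      push_cast
      ring
    set κ : ℝ≥0∞ := (μ (B i))⁻¹ * ENNReal.ofReal (δ ^ ((i:ℝ) * γ)) with hκdef
    have hκtop : κ ≠ ⊤ :=
      ENNReal.mul_ne_top (ENNReal.inv_ne_top.mpr (hBne i)) ENNReal.ofReal_ne_top
    have hpt : ∀ y ∈ A (i+1), Dgamma d μ γ x y (δ ^ k) * ENNReal.ofReal |u y - c 0|
        ≤ κ * ENNReal.ofReal |u y - c 0| := by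
      intro y hy
      rw [hAsucc i] at hy
      have hd : δ ^ (k - (i:ℤ)) ≤ d x y := not_lt.1 hy.2
      have hdpos : 0 < d x y := lt_of_lt_of_le (hrpos i) hd
      have hkpos : (0:ℝ) < δ ^ k := zpow_pos hδ0 _
      refine mul_le_mul' ?_ le_rfl
      rw [Dgamma, hκdef]
      refine mul_le_mul' ?_ ?_
      · refine ENNReal.inv_le_inv.mpr ?_
        calc μ (B i) ≤ μ (ball d x (d x y)) := measure_mono (ball_mono d x hd)
          _ ≤ μ (ball d x (δ ^ k)) + μ (ball d x (d x y)) := le_add_self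
      · refine ENNReal.ofReal_le_ofReal ?_
        have hratio : δ ^ k / (δ ^ k + d x y) ≤ δ ^ (i:ℕ) := by
          have h1 : δ ^ k / (δ ^ k + d x y) ≤ δ ^ k / δ ^ (k - (i:ℤ)) :=
            div_le_div_of_nonneg_left hkpos.le (hrpos i)
              (le_trans hd (le_add_of_nonneg_left hkpos.le))
          have h2 : δ ^ k / δ ^ (k - (i:ℤ)) = δ ^ (i:ℕ) := by
            rw [← zpow_natCast δ i, ← zpow_sub₀ hδ0.ne']
            congr 1
            ring
          rw [h2] at h1
          exact h1
        calc (δ ^ k / (δ ^ k + d x y)) ^ γ ≤ ((δ:ℝ) ^ (i:ℕ)) ^ γ :=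
            Real.rpow_le_rpow (by positivity) hratio hγ.le
          _ = δ ^ ((i:ℝ) * γ) := by
              rw [← Real.rpow_natCast δ i, ← Real.rpow_mul hδ0.le]
    have hsplit : (∫⁻ y in B (i+1), ENNReal.ofReal |u y - c 0| ∂μ)
        ≤ osc (i+1) + ENNReal.ofReal |c (i+1) - c 0| * μ (B (i+1)) := by
      have hpt2 : ∀ y ∈ B (i+1), ENNReal.ofReal |u y - c 0|
          ≤ ENNReal.ofReal |u y - c (i+1)| + ENNReal.ofReal |c (i+1) - c 0| := by
        intro y _
        rw [← ENNReal.ofReal_add (abs_nonneg _) (abs_nonneg _)]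
        refine ENNReal.ofReal_le_ofReal ?_
        calc |u y - c 0| = |(u y - c (i+1)) + (c (i+1) - c 0)| := by ring_nf
          _ ≤ |u y - c (i+1)| + |c (i+1) - c 0| := abs_add_le _ _
      calc (∫⁻ y in B (i+1), ENNReal.ofReal |u y - c 0| ∂μ)
          ≤ ∫⁻ y in B (i+1),
              (ENNReal.ofReal |u y - c (i+1)| + ENNReal.ofReal |c (i+1) - c 0|) ∂μ :=
            setLIntegral_mono
              ((ENNReal.measurable_ofReal.comp ((hu.sub measurable_const).abs)).add
                measurable_const) hpt2
        _ = osc (i+1) + ENNReal.ofReal |c (i+1) - c 0| * μ (B (i+1)) := by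
            rw [lintegral_add_right _ measurable_const, setLIntegral_const]
    calc (∫⁻ y in A (i+1), Dgamma d μ γ x y (δ ^ k) * ENNReal.ofReal |u y - c 0| ∂μ)
        ≤ ∫⁻ y in A (i+1), κ * ENNReal.ofReal |u y - c 0| ∂μ :=
          setLIntegral_mono (hmeasv (c 0) κ) hpt
      _ ≤ ∫⁻ y in B (i+1), κ * ENNReal.ofReal |u y - c 0| ∂μ :=
          lintegral_mono_set (hAsub (i+1))
      _ = κ * ∫⁻ y in B (i+1), ENNReal.ofReal |u y - c 0| ∂μ :=
          lintegral_const_mul' κ _ hκtop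
      _ ≤ κ * (osc (i+1) + ENNReal.ofReal |c (i+1) - c 0| * μ (B (i+1))) :=
          mul_le_mul' le_rfl hsplit
      _ ≤ κ * (osc (i+1) + (Ke * ∑ j ∈ Finset.range (i+2), a j) * μ (B (i+1))) := by
          gcongr
          exact htel (i+1)
      _ ≤ ((Ke * (μ (B (i+1)))⁻¹) * ENNReal.ofReal (δ ^ ((i:ℝ) * γ))) *
            (osc (i+1) + (Ke * ∑ j ∈ Finset.range (i+2), a j) * μ (B (i+1))) := by
          rw [hκdef]
          exact mul_le_mul' (mul_le_mul' (hKinv i) le_rfl) le_rfl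
      _ = Ke * ENNReal.ofReal (δ ^ ((i:ℝ) * γ)) * ((μ (B (i+1)))⁻¹ * osc (i+1))
            + Ke ^ 2 * ENNReal.ofReal (δ ^ ((i:ℝ) * γ)) * ((μ (B (i+1)))⁻¹ * μ (B (i+1)))
              * ∑ j ∈ Finset.range (i+2), a j := by
          ring
      _ = Ke * ENNReal.ofReal (δ ^ ((i:ℝ) * γ)) * a (i+1)
            + Ke ^ 2 * ENNReal.ofReal (δ ^ ((i:ℝ) * γ)) * ∑ j ∈ Finset.range (i+2), a j := by
          rw [ENNReal.inv_mul_cancel (hBne (i+1)) (hBtop (i+1)), mul_one]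
      _ ≤ Ke * ENNReal.ofReal (δ ^ ((i:ℝ) * γ)) * ∑ j ∈ Finset.range (i+2), a j
            + Ke ^ 2 * ENNReal.ofReal (δ ^ ((i:ℝ) * γ)) * ∑ j ∈ Finset.range (i+2), a j := by
          gcongr
          exact Finset.single_le_sum (f := a) (fun j _ => zero_le)
            (Finset.self_mem_range_succ (i+1))
      _ = (Ke + Ke ^ 2) * w (i+1) * ∑ j ∈ Finset.range (i+2), a j := by
          rw [hw1]
          ring
  -- bound on annulus 0
  have hann0 : (∫⁻ y in A 0, Dgamma d μ γ x y (δ ^ k) * ENNReal.ofReal |u y - c 0| ∂μ)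
      ≤ (Ke + Ke ^ 2) * w 0 * ∑ j ∈ Finset.range 1, a j := by
    have hpt : ∀ y ∈ A 0, Dgamma d μ γ x y (δ ^ k) * ENNReal.ofReal |u y - c 0|
        ≤ (μ (B 0))⁻¹ * ENNReal.ofReal |u y - c 0| := by
      intro y _
      refine mul_le_mul' ?_ le_rfl
      rw [Dgamma]
      have hkpos : (0:ℝ) < δ ^ k := zpow_pos hδ0 _
      have hden : (0:ℝ) < δ ^ k + d x y := add_pos_of_pos_of_nonneg hkpos (hSHT.nonneg x y)
      calc (μ (ball d x (δ ^ k)) + μ (ball d x (d x y)))⁻¹ *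
            ENNReal.ofReal ((δ ^ k / (δ ^ k + d x y)) ^ γ)
          ≤ (μ (B 0))⁻¹ * 1 := by
            refine mul_le_mul' ?_ ?_
            · refine ENNReal.inv_le_inv.mpr ?_
              rw [hB0]
              exact le_self_add
            · refine ENNReal.ofReal_le_one.mpr ?_
              refine Real.rpow_le_one (by positivity) ?_ hγ.le
              rw [div_le_one hden]
              exact le_add_of_nonneg_right (hSHT.nonneg x y)
        _ = (μ (B 0))⁻¹ := mul_one _
    have h2 : (1:ℝ≥0∞) ≤ w 0 := by
      rw [hwdef]
      refine ENNReal.one_le_ofReal.mpr ?_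
      refine Real.one_le_rpow_of_pos_of_le_one_of_nonpos hδ0 hδ1.le ?_
      push_cast
      nlinarith [hγ.le]
    calc (∫⁻ y in A 0, Dgamma d μ γ x y (δ ^ k) * ENNReal.ofReal |u y - c 0| ∂μ)
        ≤ ∫⁻ y in A 0, (μ (B 0))⁻¹ * ENNReal.ofReal |u y - c 0| ∂μ :=
          setLIntegral_mono (hmeasv (c 0) _) hpt
      _ ≤ ∫⁻ y in B 0, (μ (B 0))⁻¹ * ENNReal.ofReal |u y - c 0| ∂μ :=
          lintegral_mono_set (hAsub 0)
      _ = (μ (B 0))⁻¹ * osc 0 := by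
          rw [lintegral_const_mul' _ _ (ENNReal.inv_ne_top.mpr (hBne 0))]
      _ = a 0 := rfl
      _ = 1 * 1 * a 0 := by ring
      _ ≤ (Ke + Ke ^ 2) * w 0 * a 0 :=
          mul_le_mul' (mul_le_mul' (le_trans hKe1 le_self_add) h2) le_rfl
      _ = (Ke + Ke ^ 2) * w 0 * ∑ j ∈ Finset.range 1, a j := by
          rw [Finset.sum_range_one]
  -- sum over annuli
  have hsum : (∫⁻ y, Dgamma d μ γ x y (δ ^ k) * ENNReal.ofReal |u y - c 0| ∂μ)
      ≤ ∑' i : ℕ, (Ke + Ke ^ 2) * w i * ∑ j ∈ Finset.range (i+1), a j := by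
    rw [hdecomp]
    refine ENNReal.tsum_le_tsum fun i => ?_
    cases i with
    | zero => exact hann0
    | succ i => exact hann i
  -- swap the double sum
  have hgeom : (∑' m : ℕ, ENNReal.ofReal (δ ^ γ) ^ m) = (1 - ENNReal.ofReal (δ ^ γ))⁻¹ :=
    ENNReal.tsum_geometric _
  have hswap : (∑' i : ℕ, w i * ∑ j ∈ Finset.range (i+1), a j)
      ≤ ENNReal.ofReal (δ ^ (-γ) * (1 - δ ^ γ)⁻¹) *
          ∑' j : ℕ, ENNReal.ofReal (δ ^ ((j:ℝ) * γ)) * a j := by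
    have h1 : ∀ i : ℕ, w i * ∑ j ∈ Finset.range (i+1), a j
        = ∑' j : ℕ, (if j ≤ i then w i * a j else 0) := by
      intro i
      rw [tsum_eq_sum (s := Finset.range (i+1)) (f := fun j => if j ≤ i then w i * a j else 0)
        (fun b hb => if_neg (fun h => hb (Finset.mem_range.mpr (Nat.lt_succ_of_le h))))]
      rw [Finset.mul_sum]
      exact Finset.sum_congr rfl fun j hj =>
        (if_pos (Nat.lt_succ_iff.mp (Finset.mem_range.mp hj))).symm
    have hperj : ∀ j : ℕ, (∑' i : ℕ, if j ≤ i then w i * a j else 0)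
        ≤ ENNReal.ofReal (δ ^ (-γ) * (1 - δ ^ γ)⁻¹) *
            (ENNReal.ofReal (δ ^ ((j:ℝ) * γ)) * a j) := by
      intro j
      have h2 : ∀ i : ℕ, (if j ≤ i then w i * a j else 0) = (if j ≤ i then w i else 0) * a j := by
        intro i
        split <;> simp
      have hsupp : Function.support (fun i : ℕ => if j ≤ i then w i else 0)
          ⊆ Set.range (fun m : ℕ => j + m) := by
        intro i hi
        rw [Function.mem_support] at hi
        by_cases h : j ≤ i
        · exact ⟨i - j, show j + (i - j) = i by omega⟩
        · exact absurd (if_neg h) hi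
      have h3 : (∑' i : ℕ, if j ≤ i then w i else 0) = ∑' m : ℕ, w (j + m) := by
        rw [← Function.Injective.tsum_eq (f := fun i => if j ≤ i then w i else 0)
          (add_right_injective j) hsupp]
        exact tsum_congr fun m => if_pos (Nat.le_add_right j m)
      have h4 : ∀ m : ℕ, w (j + m)
          = ENNReal.ofReal (δ ^ (-γ)) * ENNReal.ofReal (δ ^ ((j:ℝ) * γ)) *
              ENNReal.ofReal (δ ^ γ) ^ m := by
        intro m
        rw [hwdef]
        simp only
        have harg : ((((j + m : ℕ)):ℝ) - 1) * γ = (-γ) + ((j:ℝ) * γ + γ * ((m:ℕ):ℝ)) := by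
          push_cast
          ring
        rw [harg, Real.rpow_add hδ0, Real.rpow_add hδ0, Real.rpow_mul hδ0.le γ ((m:ℕ):ℝ),
          Real.rpow_natCast]
        rw [ENNReal.ofReal_mul (by positivity), ENNReal.ofReal_mul (by positivity),
          ENNReal.ofReal_pow hδγ0.le, mul_assoc]
      refine le_of_eq ?_
      calc (∑' i : ℕ, if j ≤ i then w i * a j else 0)
          = (∑' i : ℕ, if j ≤ i then w i else 0) * a j := by
            rw [← ENNReal.tsum_mul_right]
            exact tsum_congr h2
        _ = (∑' m : ℕ, w (j + m)) * a j := by rw [h3]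
        _ = (ENNReal.ofReal (δ ^ (-γ)) * ENNReal.ofReal (δ ^ ((j:ℝ) * γ)) *
              (1 - ENNReal.ofReal (δ ^ γ))⁻¹) * a j := by
            rw [tsum_congr h4, ENNReal.tsum_mul_left, hgeom]
        _ = ENNReal.ofReal (δ ^ (-γ) * (1 - δ ^ γ)⁻¹) *
              (ENNReal.ofReal (δ ^ ((j:ℝ) * γ)) * a j) := by
            rw [ENNReal.ofReal_mul (by positivity), ENNReal.ofReal_inv_of_pos (sub_pos.mpr hδγ1),
              ENNReal.ofReal_sub _ hδγ0.le, ENNReal.ofReal_one]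
            ring
    calc (∑' i : ℕ, w i * ∑ j ∈ Finset.range (i+1), a j)
        = ∑' i : ℕ, ∑' j : ℕ, (if j ≤ i then w i * a j else 0) := tsum_congr h1
      _ = ∑' j : ℕ, ∑' i : ℕ, (if j ≤ i then w i * a j else 0) := ENNReal.tsum_comm
      _ ≤ ∑' j : ℕ, ENNReal.ofReal (δ ^ (-γ) * (1 - δ ^ γ)⁻¹) *
            (ENNReal.ofReal (δ ^ ((j:ℝ) * γ)) * a j) := ENNReal.tsum_le_tsum hperj
      _ = ENNReal.ofReal (δ ^ (-γ) * (1 - δ ^ γ)⁻¹) *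
            ∑' j : ℕ, ENNReal.ofReal (δ ^ ((j:ℝ) * γ)) * a j := ENNReal.tsum_mul_left
  -- final assembly
  have hc0eq : (⨍ z in ball d x (δ ^ k), u z ∂μ) = c 0 := by
    simp only [hcdef]
    rw [hB0]
  have hgoalR : (∑' i : ℕ, ENNReal.ofReal (δ ^ ((i : ℝ) * γ)) *
        ((μ (ball d x (δ ^ (k - i))))⁻¹ *
          ∫⁻ y in ball d x (δ ^ (k - i)),
            ENNReal.ofReal |u y - ⨍ z in ball d x (δ ^ (k - i)), u z ∂μ| ∂μ))
      = ∑' i : ℕ, ENNReal.ofReal (δ ^ ((i : ℝ) * γ)) * a i := by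
    refine tsum_congr fun i => ?_
    simp only [hadef, hoscdef, hcdef, hBdef]
  calc (∫⁻ y, Dgamma d μ γ x y (δ ^ k) *
          ENNReal.ofReal |u y - ⨍ z in ball d x (δ ^ k), u z ∂μ| ∂μ)
      = ∫⁻ y, Dgamma d μ γ x y (δ ^ k) * ENNReal.ofReal |u y - c 0| ∂μ := by
        rw [hc0eq]
    _ ≤ ∑' i : ℕ, (Ke + Ke ^ 2) * w i * ∑ j ∈ Finset.range (i+1), a j := hsum
    _ = (Ke + Ke ^ 2) * ∑' i : ℕ, w i * ∑ j ∈ Finset.range (i+1), a j := by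
        rw [← ENNReal.tsum_mul_left]
        exact tsum_congr fun i => by rw [mul_assoc]
    _ ≤ (Ke + Ke ^ 2) * (ENNReal.ofReal (δ ^ (-γ) * (1 - δ ^ γ)⁻¹) *
          ∑' j : ℕ, ENNReal.ofReal (δ ^ ((j:ℝ) * γ)) * a j) := mul_le_mul' le_rfl hswap
    _ = ENNReal.ofReal ((K + K ^ 2) * δ ^ (-γ) * (1 - δ ^ γ)⁻¹) *
          ∑' j : ℕ, ENNReal.ofReal (δ ^ ((j:ℝ) * γ)) * a j := by
        rw [← mul_assoc]
        congr 1
        rw [hKe, ← ENNReal.ofReal_pow hK0.le,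
          ← ENNReal.ofReal_add hK0.le (pow_nonneg hK0.le 2),
          ← ENNReal.ofReal_mul (add_nonneg hK0.le (pow_nonneg hK0.le 2))]
        congr 1
        ring
    _ = ENNReal.ofReal ((K + K ^ 2) * δ ^ (-γ) * (1 - δ ^ γ)⁻¹) *
          ∑' i : ℕ, ENNReal.ofReal (δ ^ ((i : ℝ) * γ)) *
            ((μ (ball d x (δ ^ (k - i))))⁻¹ *
              ∫⁻ y in ball d x (δ ^ (k - i)),
                ENNReal.ofReal |u y - ⨍ z in ball d x (δ ^ (k - i)), u z ∂μ| ∂μ) := by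
        rw [hgoalR]

end SHT
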